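/- Let A ∈ ℤ^{m×n} and B ∈ ℤ^{m×l}, with entries of A bounded by Δ. If the mixed-integer program max{c^T x + d^T y : Ax + By = b, x ≥ 0, y ≥ 0, x ∈ ℤ^n, y ∈ ℝ^l} has an optimal solution and c is non-degenerate (c^T z ≠ 0 for all nonzero integer z with ‖z‖_∞ ≤ (m+2)·(m·Δ)^m), then it has an optimal solution (x*, y*) such that at least n − m components of x* are bounded by (m+2)·(m·Δ)^m and the columns of A corresponding to the remaining components of x* are linearly independent. -/

import Mathlib

lemma exists_rows_det_ne_zero {m : ℕ} {ι : Type*} [Fintype ι] [DecidableEq ι]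
    (M : Matrix (Fin m) ι ℚ)
    (h : LinearIndependent ℚ (fun j : ι => fun i => M i j)) :
    ∃ r : ι → Fin m, (M.submatrix r id).det ≠ 0 := by
  classical
  have htr : LinearIndependent ℚ (M.transpose) := h
  have hrk : M.rank = Fintype.card ι := by
    rw [← Matrix.rank_transpose]; exact htr.rank_matrix
  have hspanrow : M.rank = Module.finrank ℚ (Submodule.span ℚ (Set.range M)) :=
    M.rank_eq_finrank_span_row
  obtain ⟨s, hsub, hspan, hind⟩ := exists_linearIndependent ℚ (Set.range M)
  haveI : Fintype s := ((Set.finite_range M).subset hsub).fintype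
  have hcards : s.toFinset.card = Fintype.card ι := by
    have h1 : Module.finrank ℚ (Submodule.span ℚ s) = s.toFinset.card :=
      finrank_span_set_eq_card hind
    rw [hspan, hspanrow.symm.trans hrk] at h1
    exact h1.symm
  have hcard : Fintype.card ι = Fintype.card s := by
    rw [Set.toFinset_card] at hcards; exact hcards.symm
  obtain ⟨e⟩ : Nonempty (ι ≃ s) := ⟨Fintype.equivOfCardEq hcard⟩
  choose r hr using fun v : s => hsub v.2
  set D := M.submatrix (fun j => r (e j)) id with hD
  refine ⟨fun j => r (e j), ?_⟩
  have hrows : (fun j : ι => D j) = (fun v : s => (v : ι → ℚ)) ∘ e := by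
    funext j; simp only [hD, Function.comp]
    have := hr (e j)
    funext j'; simp [Matrix.submatrix_apply, this]
  have hliD : LinearIndependent ℚ (fun j : ι => D j) := by
    rw [hrows]; exact hind.comp e e.injective
  have : IsUnit D := Matrix.linearIndependent_rows_iff_isUnit.mp hliD
  exact ((Matrix.isUnit_iff_isUnit_det D).mp this).ne_zero

lemma kernel_arith {m Δ k : ℕ} (hk : k ≤ m) (hΔ1 : 1 ≤ Δ ∨ m = 0) :
    k.factorial * Δ ^ k ≤ (m + 2) * (m * Δ) ^ m := by
  rcases hΔ1 with hΔ | hm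
  · calc k.factorial * Δ ^ k ≤ m.factorial * Δ ^ m :=
          Nat.mul_le_mul (Nat.factorial_le hk) (Nat.pow_le_pow_right hΔ hk)
    _ ≤ m ^ m * Δ ^ m := Nat.mul_le_mul_right _ (Nat.factorial_le_pow m)
    _ = (m * Δ) ^ m := (mul_pow m Δ m).symm
    _ ≤ (m + 2) * (m * Δ) ^ m := Nat.le_mul_of_pos_left _ (by omega)
  · subst hm
    interval_cases k <;> simp [Nat.factorial]

lemma exists_bounded_kernel {m n Δ : ℕ} (A : Matrix (Fin m) (Fin n) ℤ)
    (hΔ : ∀ i j, |A i j| ≤ (Δ : ℤ)) (hΔ1 : 1 ≤ Δ ∨ m = 0)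
    (S : Finset (Fin n))
    (hdep : ¬ LinearIndependent ℚ (fun j : {j // j ∈ S} => fun i => (A i j.1 : ℚ))) :
    ∃ z : Fin n → ℤ, z ≠ 0 ∧ (∀ j, j ∉ S → z j = 0) ∧
      (∀ j, |z j| ≤ (((m + 2) * (m * Δ) ^ m : ℕ) : ℤ)) ∧
      (∀ i, ∑ j, A i j * z j = 0) := by
  classical
  set P : Finset (Fin n) → Prop :=
    fun T => ¬ LinearIndependent ℚ (fun j : {j // j ∈ T} => fun i => (A i j.1 : ℚ)) with hP
  obtain ⟨T, hTmem, hTmin⟩ :=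
    (S.powerset.filter P).exists_minimal ⟨S, by simp [P, hdep]⟩
  rw [Finset.mem_filter, Finset.mem_powerset] at hTmem
  obtain ⟨hTS, hPT⟩ := hTmem
  rw [hP, Fintype.not_linearIndependent_iff] at hPT
  obtain ⟨g, hg, t0, hgt0⟩ := hPT
  set T' : Finset (Fin n) := T.erase t0.1 with hT'
  have ht0T : t0.1 ∈ T := t0.2
  have ht0T' : t0.1 ∉ T' := Finset.notMem_erase _ _
  have hT'T : T' ⊆ T := Finset.erase_subset _ _
  -- T' is independent
  have hindT' : LinearIndependent ℚ (fun j : {j // j ∈ T'} => fun i => (A i j.1 : ℚ)) := by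
    by_contra hdep'
    have hmem : T' ∈ S.powerset.filter P := by
      rw [Finset.mem_filter, Finset.mem_powerset]
      exact ⟨hT'T.trans hTS, hdep'⟩
    exact (Finset.not_subset.mpr ⟨t0.1, ht0T, ht0T'⟩) (hTmin hmem hT'T)
  -- card bound
  have hkm : T'.card ≤ m := by
    have := hindT'.fintype_card_le_finrank
    rwa [Module.finrank_fin_fun, Fintype.card_coe] at this
  set k := T'.card with hkdef
  -- row selection
  set M : Matrix (Fin m) {j // j ∈ T'} ℚ := fun i j => (A i j.1 : ℚ) with hM
  obtain ⟨r, hdet⟩ := exists_rows_det_ne_zero M hindT'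
  set Dz : Matrix {j // j ∈ T'} {j // j ∈ T'} ℤ := fun p q => A (r p) q.1 with hDz
  set v : {j // j ∈ T'} → ℤ := fun p => A (r p) t0.1 with hv
  set w : {j // j ∈ T'} → ℤ := Matrix.cramer Dz v with hw
  set δ : ℤ := Dz.det with hδdef
  have hmapD : Dz.map (Int.cast : ℤ → ℚ) = M.submatrix r id := by
    ext p q; simp [Matrix.map_apply, hDz, hM]; rfl
  have hδQ : (δ : ℚ) = (M.submatrix r id).det := by
    rw [hδdef, ← hmapD]
    exact (RingHom.map_det (Int.castRingHom ℚ) Dz)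
  have hδ : δ ≠ 0 := by
    intro h0; apply hdet; rw [← hδQ, h0]; norm_num
  -- the candidate vector
  set z : Fin n → ℤ := fun j =>
    if h : j ∈ T' then -(w ⟨j, h⟩) else if j = t0.1 then δ else 0 with hz
  have hzt0 : z t0.1 = δ := by simp [hz, ht0T']
  have hzT' : ∀ (j) (h : j ∈ T'), z j = -(w ⟨j, h⟩) := by intro j h; simp [hz, h]
  have hzout : ∀ j, j ∉ T → z j = 0 := by
    intro j hj
    have h1 : j ∉ T' := fun h => hj (hT'T h)
    have h2 : j ≠ t0.1 := fun h => hj (h ▸ ht0T)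
    simp [hz, h1, h2]
  -- bounds
  have hNk : (k.factorial * Δ ^ k : ℤ) ≤ (((m + 2) * (m * Δ) ^ m : ℕ) : ℤ) := by
    have := kernel_arith hkm hΔ1
    exact_mod_cast this
  have habs : ∀ j, |z j| ≤ (((m + 2) * (m * Δ) ^ m : ℕ) : ℤ) := by
    intro j
    by_cases h1 : j ∈ T'
    · rw [hzT' j h1, abs_neg]
      refine le_trans ?_ hNk
      have : w ⟨j, h1⟩ = (Dz.updateCol ⟨j, h1⟩ v).det := Matrix.cramer_apply _ _ _
      rw [this]
      have := Matrix.det_le (A := Dz.updateCol ⟨j, h1⟩ v)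
        (abv := AbsoluteValue.abs) (x := (Δ : ℤ)) ?_
      · simpa [nsmul_eq_mul] using this
      · intro p q
        rw [Matrix.updateCol_apply]
        split
        · exact hΔ _ _
        · exact hΔ _ _
    · by_cases h2 : j = t0.1
      · subst h2
        rw [hzt0]
        refine le_trans ?_ hNk
        have := Matrix.det_le (A := Dz) (abv := AbsoluteValue.abs) (x := (Δ : ℤ))
          (fun p q => hΔ _ _)
        simpa [nsmul_eq_mul, hδdef] using this
      · have : z j = 0 := by simp [hz, h1, h2]
        rw [this, abs_zero]
        positivity
  -- kernel property on selected rows (over ℤ)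
  have hrowker : ∀ p : {j // j ∈ T'}, ∑ j, A (r p) j * z j = 0 := by
    intro p
    have hsub : ∑ j, A (r p) j * z j = ∑ j ∈ T, A (r p) j * z j := by
      refine (Finset.sum_subset (Finset.subset_univ T) ?_).symm
      intro j _ hj; rw [hzout j hj, mul_zero]
    have hins : ∑ j ∈ T, A (r p) j * z j
        = A (r p) t0.1 * z t0.1 + ∑ j ∈ T', A (r p) j * z j :=
      (Finset.add_sum_erase T (fun j => A (r p) j * z j) ht0T).symm
    have hT'sum : ∑ j ∈ T', A (r p) j * z j = -∑ q : {j // j ∈ T'}, Dz p q * w q := by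
      rw [← Finset.sum_coe_sort T' (fun j => A (r p) j * z j)]
      rw [← Finset.sum_neg_distrib]
      refine Finset.sum_congr rfl ?_
      intro q _
      rw [hzT' q.1 q.2]
      simp [hDz]
    have hmv : ∑ q : {j // j ∈ T'}, Dz p q * w q = δ * v p := by
      have := congrFun (Matrix.mulVec_cramer Dz v) p
      simpa [Matrix.mulVec, dotProduct, hw] using this
    rw [hsub, hins, hT'sum, hmv, hzt0]
    simp [hv]
    ring
  -- the rational dependency vector
  set u : Fin n → ℚ := fun j => if h : j ∈ T then g ⟨j, h⟩ else 0 with hu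
  have hut0 : u t0.1 = g t0 := by simp [hu, ht0T]
  have huout : ∀ j, j ∉ T → u j = 0 := by intro j hj; simp [hu, hj]
  have huker : ∀ i, ∑ j, (A i j : ℚ) * u j = 0 := by
    intro i
    have hsub : ∑ j, (A i j : ℚ) * u j = ∑ j ∈ T, (A i j : ℚ) * u j := by
      refine (Finset.sum_subset (Finset.subset_univ T) ?_).symm
      intro j _ hj; rw [huout j hj, mul_zero]
    have hcoe : ∑ j ∈ T, (A i j : ℚ) * u j
        = ∑ p : {j // j ∈ T}, (A i p.1 : ℚ) * g p := by
      rw [← Finset.sum_coe_sort T (fun j => (A i j : ℚ) * u j)]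
      refine Finset.sum_congr rfl ?_
      intro p _
      congr 1
      simp [hu, p.2]
    have h0 := congrFun hg i
    simp only [Finset.sum_apply, Pi.smul_apply, smul_eq_mul, Pi.zero_apply] at h0
    rw [hsub, hcoe]
    rw [← h0]
    exact Finset.sum_congr rfl fun p _ => mul_comm _ _
  -- the combination wq vanishes
  set wq : Fin n → ℚ := fun j => u t0.1 * (z j : ℚ) - (δ : ℚ) * u j with hwq
  have hwqt0 : wq t0.1 = 0 := by
    show u t0.1 * ((z t0.1 : ℤ) : ℚ) - (δ : ℚ) * u t0.1 = 0
    rw [hzt0]; ring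
  have hwqout : ∀ j, j ∉ T → wq j = 0 := by
    intro j hj
    show u t0.1 * ((z j : ℤ) : ℚ) - (δ : ℚ) * u j = 0
    rw [hzout j hj, huout j hj]; simp
  have hwqrow : ∀ p : {j // j ∈ T'}, ∑ j, (A (r p) j : ℚ) * wq j = 0 := by
    intro p
    have h1 : ∑ j, (A (r p) j : ℚ) * wq j
        = u t0.1 * ∑ j, (A (r p) j : ℚ) * (z j : ℚ)
          - (δ : ℚ) * ∑ j, (A (r p) j : ℚ) * u j := by
      rw [Finset.mul_sum, Finset.mul_sum, ← Finset.sum_sub_distrib]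
      exact Finset.sum_congr rfl fun j _ => by show _ = _; rw [hwq]; ring
    have h2 : ∑ j, (A (r p) j : ℚ) * (z j : ℚ) = 0 := by
      have h3 : ((∑ j, A (r p) j * z j : ℤ) : ℚ) = 0 := by rw [hrowker p]; simp
      push_cast at h3
      exact h3
    rw [h1, h2, huker (r p)]
    ring
  have hvec : (M.submatrix r id).mulVec (fun q : {j // j ∈ T'} => wq q.1) = 0 := by
    funext p
    have hmve : (M.submatrix r id).mulVec (fun q : {j // j ∈ T'} => wq q.1) p
        = ∑ q : {j // j ∈ T'}, (A (r p) q.1 : ℚ) * wq q.1 := by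
      simp [Matrix.mulVec, dotProduct, hM]; rfl
    have hsplit : ∑ q : {j // j ∈ T'}, (A (r p) q.1 : ℚ) * wq q.1
        = ∑ j ∈ T', (A (r p) j : ℚ) * wq j :=
      Finset.sum_coe_sort T' (fun j => (A (r p) j : ℚ) * wq j)
    have hTsum : ∑ j ∈ T, (A (r p) j : ℚ) * wq j = ∑ j, (A (r p) j : ℚ) * wq j :=
      Finset.sum_subset (Finset.subset_univ T)
        (fun j _ hj => by rw [hwqout j hj, mul_zero])
    have hins : (A (r p) t0.1 : ℚ) * wq t0.1 + ∑ j ∈ T', (A (r p) j : ℚ) * wq j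
        = ∑ j ∈ T, (A (r p) j : ℚ) * wq j :=
      Finset.add_sum_erase T (fun j => (A (r p) j : ℚ) * wq j) ht0T
    have : ∑ j ∈ T', (A (r p) j : ℚ) * wq j = 0 := by
      have := hins.trans (hTsum.trans (hwqrow p))
      rw [hwqt0, mul_zero, zero_add] at this
      exact this
    rw [hmve, hsplit, this]
    rfl
  have hUnit : IsUnit (M.submatrix r id) :=
    (Matrix.isUnit_iff_isUnit_det _).mpr (isUnit_iff_ne_zero.mpr hdet)
  have hinj := Matrix.mulVec_injective_iff_isUnit.mpr hUnit
  have hwq0 : (fun q : {j // j ∈ T'} => wq q.1) = 0 := by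
    apply hinj
    rw [hvec, Matrix.mulVec_zero]
  have hwqall : ∀ j, wq j = 0 := by
    intro j
    by_cases h1 : j ∈ T'
    · exact congrFun hwq0 ⟨j, h1⟩
    · by_cases h2 : j = t0.1
      · rw [h2]; exact hwqt0
      · refine hwqout j (fun hT => h1 ?_)
        exact Finset.mem_erase.mpr ⟨h2, hT⟩
  have hprop : ∀ j, u t0.1 * (z j : ℚ) = (δ : ℚ) * u j := by
    intro j
    have h := hwqall j
    simp only [hwq] at h
    linarith [h]
  have hu0 : u t0.1 ≠ 0 := by rw [hut0]; exact hgt0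
  have hker : ∀ i, ∑ j, A i j * z j = 0 := by
    intro i
    have hQ : u t0.1 * ∑ j, (A i j : ℚ) * (z j : ℚ) = 0 := by
      rw [Finset.mul_sum]
      have : ∀ j ∈ Finset.univ, u t0.1 * ((A i j : ℚ) * (z j : ℚ))
          = (δ : ℚ) * ((A i j : ℚ) * u j) := by
        intro j _
        rw [show u t0.1 * ((A i j : ℚ) * (z j : ℚ)) = (A i j : ℚ) * (u t0.1 * (z j : ℚ)) by ring,
          hprop j]
        ring
      rw [Finset.sum_congr rfl this, ← Finset.mul_sum, huker i, mul_zero]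
    have hzero : ∑ j, (A i j : ℚ) * (z j : ℚ) = 0 := by
      rcases mul_eq_zero.mp hQ with h | h
      · exact absurd h hu0
      · exact h
    have : ((∑ j, A i j * z j : ℤ) : ℚ) = 0 := by push_cast; exact hzero
    exact_mod_cast this
  refine ⟨z, ?_, ?_, habs, hker⟩
  · intro h0
    apply hδ
    rw [← hzt0, h0]
    rfl
  · intro j hj
    exact hzout j (fun hT => hj (hTS hT))

set_option maxHeartbeats 1600000 in
/-- Lemma 3 (mixed-integer version): if the MIP has an optimal solution and `c` is
non-degenerate, then it has an optimal solution `(x*, y*)` such that at least `n - m`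
components of `x*` are bounded by `(m+2)(mΔ)^m` and the columns of `A` corresponding to
the remaining components are linearly independent. -/
theorem mip_optimal_solution_few_large_components (m n l : ℕ) (Δ : ℕ)
    (A : Matrix (Fin m) (Fin n) ℤ) (B : Matrix (Fin m) (Fin l) ℤ)
    (b : Fin m → ℤ) (c : Fin n → ℝ) (d : Fin l → ℝ)
    (hΔ : ∀ i j, |A i j| ≤ (Δ : ℤ))
    (hc : ∀ z : Fin n → ℤ, z ≠ 0 → (∀ j, |z j| ≤ ((m + 2) * (m * Δ) ^ m : ℕ)) →
      (∑ j, c j * (z j : ℝ)) ≠ 0)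
    (hopt : ∃ (x : Fin n → ℤ) (y : Fin l → ℝ),
      ((0 ≤ x) ∧ (0 ≤ y) ∧
        ∀ i, (∑ j, (x j : ℝ) * (A i j : ℝ)) + (∑ j, y j * (B i j : ℝ)) = (b i : ℝ)) ∧
      ∀ (x' : Fin n → ℤ) (y' : Fin l → ℝ),
        (0 ≤ x') → (0 ≤ y') →
        (∀ i, (∑ j, (x' j : ℝ) * (A i j : ℝ)) + (∑ j, y' j * (B i j : ℝ)) = (b i : ℝ)) →
        (∑ j, c j * (x' j : ℝ)) + (∑ j, d j * y' j) ≤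
          (∑ j, c j * (x j : ℝ)) + (∑ j, d j * y j)) :
    ∃ (x : Fin n → ℤ) (y : Fin l → ℝ),
      ((0 ≤ x) ∧ (0 ≤ y) ∧
        ∀ i, (∑ j, (x j : ℝ) * (A i j : ℝ)) + (∑ j, y j * (B i j : ℝ)) = (b i : ℝ)) ∧
      (∀ (x' : Fin n → ℤ) (y' : Fin l → ℝ),
        (0 ≤ x') → (0 ≤ y') →
        (∀ i, (∑ j, (x' j : ℝ) * (A i j : ℝ)) + (∑ j, y' j * (B i j : ℝ)) = (b i : ℝ)) →
        (∑ j, c j * (x' j : ℝ)) + (∑ j, d j * y' j) ≤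
          (∑ j, c j * (x j : ℝ)) + (∑ j, d j * y j)) ∧
      n - m ≤ (Finset.univ.filter
        (fun j => x j ≤ ((m + 2) * (m * Δ) ^ m : ℕ))).card ∧
      LinearIndependent ℚ
        (fun j : {j : Fin n // ((m + 2) * (m * Δ) ^ m : ℕ) < x j} =>
          (fun i => (A i j.1 : ℚ))) := by
  classical
  obtain ⟨x, y, ⟨hx, hy, hfeas⟩, hbest⟩ := hopt
  set N : ℕ := (m + 2) * (m * Δ) ^ m with hN
  by_cases hcase : Δ = 0 ∧ m ≠ 0
  · -- degenerate case: A = 0 and N = 0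
    obtain ⟨hΔ0, hm0⟩ := hcase
    have hA0 : ∀ i j, A i j = 0 := by
      intro i j
      have := hΔ i j
      rw [hΔ0] at this
      simpa [abs_nonpos_iff] using this
    have hzero : ∀ (w : Fin n → ℤ) (i : Fin m),
        ∑ j, (w j : ℝ) * (A i j : ℝ) = 0 := by
      intro w i
      apply Finset.sum_eq_zero
      intro j _
      rw [hA0 i j]
      simp
    have hNzero : N = 0 := by
      rw [hN, hΔ0]
      simp [zero_pow hm0]
    -- c j ≤ 0 for all j
    have hcle : ∀ j, c j ≤ 0 := by
      intro j
      set x1 : Fin n → ℤ := fun j' => x j' + (if j' = j then 1 else 0) with hx1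
      have hfeas' : ∀ i, (∑ j', (x1 j' : ℝ) * (A i j' : ℝ))
          + (∑ j', y j' * (B i j' : ℝ)) = (b i : ℝ) := by
        intro i
        have hf := hfeas i
        rw [hzero x i] at hf
        rw [hzero x1 i]
        exact hf
      have hx1nn : 0 ≤ x1 := by
        intro j'
        have hxj : (0 : ℤ) ≤ x j' := by simpa using hx j'
        show (0 : ℤ) ≤ x j' + (if j' = j then 1 else 0)
        rcases eq_or_ne j' j with h | h
        · rw [if_pos h]; linarith
        · rw [if_neg h]; linarith
      have hle := hbest x1 y hx1nn hy hfeas'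
      have hsum : ∑ j', c j' * (x1 j' : ℝ) = (∑ j', c j' * (x j' : ℝ)) + c j := by
        have hterm : ∀ j' ∈ Finset.univ, c j' * (x1 j' : ℝ)
            = c j' * (x j' : ℝ) + (if j' = j then c j' else 0) := by
          intro j' _
          by_cases h : j' = j
          · subst h; simp only [hx1, if_pos rfl]; push_cast; ring
          · simp [hx1, h]
        rw [Finset.sum_congr rfl hterm, Finset.sum_add_distrib]
        simp
      rw [hsum] at hle
      linarith
    have hxobj : ∑ j, c j * (x j : ℝ) ≤ 0 := by
      apply Finset.sum_nonpos
      intro j _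
      have h1 : (0 : ℝ) ≤ (x j : ℝ) := by exact_mod_cast hx j
      exact mul_nonpos_of_nonpos_of_nonneg (hcle j) h1
    refine ⟨0, y, ⟨le_refl 0, hy, ?_⟩, ?_, ?_, ?_⟩
    · intro i
      have hf := hfeas i
      rw [hzero x i] at hf
      rw [hzero (0 : Fin n → ℤ) i]
      exact hf
    · intro x' y' hx' hy' hfeas'
      have h1 := hbest x' y' hx' hy' hfeas'
      have h2 : ∑ j, c j * (((0 : Fin n → ℤ) j : ℤ) : ℝ) = 0 := by simp
      rw [h2]
      calc (∑ j, c j * (x' j : ℝ)) + ∑ j, d j * y' j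
          ≤ (∑ j, c j * (x j : ℝ)) + ∑ j, d j * y j := h1
        _ ≤ 0 + ∑ j, d j * y j := by linarith
    · have : (Finset.univ.filter
          (fun j => (0 : Fin n → ℤ) j ≤ ((m + 2) * (m * Δ) ^ m : ℕ))) = Finset.univ := by
        apply Finset.filter_true_of_mem
        intro j _
        simp only [Pi.zero_apply]
        positivity
      rw [this, Finset.card_univ, Fintype.card_fin]
      omega
    · haveI : IsEmpty {j : Fin n // ((m + 2) * (m * Δ) ^ m : ℕ) < (0 : Fin n → ℤ) j} := by
        refine ⟨fun p => ?_⟩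
        refine absurd p.2 ?_
        simp only [Pi.zero_apply]
        exact not_lt.mpr (by positivity)
      exact linearIndependent_empty_type
  · -- main case
    have h2 : 1 ≤ Δ ∨ m = 0 := by
      by_contra h
      push_neg at h
      exact hcase ⟨by omega, h.2⟩
    set S : Finset (Fin n) := Finset.univ.filter (fun j => ¬ x j ≤ (N : ℤ)) with hS
    -- key: any bounded kernel vector supported on S has nonpositive objective
    have key : ∀ ζ : Fin n → ℤ, (∀ j, j ∉ S → ζ j = 0) → (∀ j, |ζ j| ≤ (N : ℤ)) →
        (∀ i, ∑ j, A i j * ζ j = 0) → (∑ j, c j * (ζ j : ℝ)) ≤ 0 := by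
      intro ζ hsupp hb hker
      by_contra hpos
      push_neg at hpos
      set x' : Fin n → ℤ := fun j => x j + ζ j with hx'
      have hx'0 : 0 ≤ x' := by
        intro j
        by_cases h : j ∈ S
        · have h1 : ¬ x j ≤ (N : ℤ) := (Finset.mem_filter.mp h).2
          have h2 := (abs_le.mp (hb j)).1
          show 0 ≤ x j + ζ j
          have h3 := not_le.mp h1
          linarith
        · have hζ0 : ζ j = 0 := hsupp j h
          show 0 ≤ x j + ζ j
          rw [hζ0, add_zero]
          exact hx j
      have hfeas' : ∀ i, (∑ j, (x' j : ℝ) * (A i j : ℝ))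
          + (∑ j, y j * (B i j : ℝ)) = (b i : ℝ) := by
        intro i
        have hz : ∑ j, (ζ j : ℝ) * (A i j : ℝ) = 0 := by
          have h0 : ((∑ j, A i j * ζ j : ℤ) : ℝ) = 0 := by rw [hker i]; simp
          push_cast at h0
          rw [← h0]
          exact Finset.sum_congr rfl fun j _ => mul_comm _ _
        have hsplit : ∑ j, (x' j : ℝ) * (A i j : ℝ)
            = (∑ j, (x j : ℝ) * (A i j : ℝ)) + ∑ j, (ζ j : ℝ) * (A i j : ℝ) := by
          rw [← Finset.sum_add_distrib]
          refine Finset.sum_congr rfl fun j _ => ?_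
          show ((x j + ζ j : ℤ) : ℝ) * (A i j : ℝ) = _
          push_cast
          ring
        rw [hsplit, hz, add_zero]
        exact hfeas i
      have hobj : ∑ j, c j * (x' j : ℝ)
          = (∑ j, c j * (x j : ℝ)) + ∑ j, c j * (ζ j : ℝ) := by
        rw [← Finset.sum_add_distrib]
        refine Finset.sum_congr rfl fun j _ => ?_
        show c j * ((x j + ζ j : ℤ) : ℝ) = _
        push_cast
        ring
      have := hbest x' y hx'0 hy hfeas'
      rw [hobj] at this
      linarith
    -- linear independence over S
    have hli_S : LinearIndependent ℚ
        (fun j : {j // j ∈ S} => fun i => (A i j.1 : ℚ)) := by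
      by_contra hdep
      obtain ⟨z, hz0, hzsupp, hzb, hzker⟩ := exists_bounded_kernel A hΔ h2 S hdep
      have hcz := hc z hz0 hzb
      have h1 := key z hzsupp hzb hzker
      have h2' := key (-z) (fun j hj => by simp [hzsupp j hj])
        (fun j => by rw [Pi.neg_apply, abs_neg]; exact hzb j)
        (fun i => by
          simp only [Pi.neg_apply, mul_neg]
          rw [Finset.sum_neg_distrib, hzker i, neg_zero])
      have h3 : ∑ j, c j * ((-z) j : ℝ) = -∑ j, c j * (z j : ℝ) := by
        rw [← Finset.sum_neg_distrib]
        refine Finset.sum_congr rfl fun j _ => ?_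
        simp only [Pi.neg_apply]
        push_cast
        ring
      rw [h3] at h2'
      apply hcz
      linarith
    have hScard : S.card ≤ m := by
      have := hli_S.fintype_card_le_finrank
      rwa [Module.finrank_fin_fun, Fintype.card_coe] at this
    refine ⟨x, y, ⟨hx, hy, hfeas⟩, hbest, ?_, ?_⟩
    · have hsplit := Finset.card_filter_add_card_filter_not
        (s := Finset.univ) (p := fun j : Fin n => x j ≤ (N : ℤ))
      rw [Finset.card_univ, Fintype.card_fin] at hsplit
      have : (Finset.univ.filter (fun j : Fin n => ¬ x j ≤ (N : ℤ))).card = S.card := rfl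
      omega
    · have hmono : ∀ p : {j : Fin n // ((m + 2) * (m * Δ) ^ m : ℕ) < x j},
          p.1 ∈ S :=
        fun p => Finset.mem_filter.mpr ⟨Finset.mem_univ _, not_le.mpr p.2⟩
      exact hli_S.comp (fun p => ⟨p.1, hmono p⟩)
        (fun p q h => by
          apply Subtype.ext
          have h2 := congrArg Subtype.val h
          simpa using h2)
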